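/- Let ρ : G → Aut_K(V) be as above and x ∈ X(ρ) a fixed vertex with representative lattice T. Then: x has no neighbor in X(ρ) iff ρ̄_T is irreducible; x has exactly one neighbor in X(ρ) iff ρ̄_T is reducible but indecomposable; x has exactly two neighbors in X(ρ) iff ρ̄_T decomposes as a direct sum of two distinct characters. -/

import Mathlib

open Pointwise

section

variable (O : Type*) [CommRing O] [IsDomain O] [IsDiscreteValuationRing O]
  (K : Type*) [Field K] [Algebra O K] [IsFractionRing O K]

/-- Lattices in `V = K²`. -/
def BTLat : Type _ :=
  {T : Submodule O (Fin 2 → K) // T.FG ∧ Submodule.span K (T : Set (Fin 2 → K)) = ⊤}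

/-- Vertices of the Bruhat–Tits tree: homothety classes of lattices. -/
def BTVtx : Type _ := Quot (fun T T' : BTLat O K => ∃ c : Kˣ, T'.1 = c • T.1)

variable {O K} in
/-- The class of a lattice. -/
def BTcls (T : BTLat O K) : BTVtx O K := Quot.mk _ T

/-- Adjacency in the Bruhat–Tits tree. -/
def BTtree (ϖ : O) : SimpleGraph (BTVtx O K) where
  Adj x y := x ≠ y ∧
    ((∃ T T' : BTLat O K, BTcls T = x ∧ BTcls T' = y ∧ ϖ • T.1 ≤ T'.1 ∧ T'.1 ≤ T.1) ∨
     (∃ T T' : BTLat O K, BTcls T = y ∧ BTcls T' = x ∧ ϖ • T.1 ≤ T'.1 ∧ T'.1 ≤ T.1))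
  symm := by
    constructor
    rintro x y ⟨hne, h⟩
    exact ⟨hne.symm, h.symm⟩
  loopless := ⟨fun x h => h.1 rfl⟩

variable {O K}

variable {G : Type*} [Group G]

/-- A submodule is stable under `ρ`. -/
def BTStable (ρ : G →* GL (Fin 2) K) (T : Submodule O (Fin 2 → K)) : Prop :=
  ∀ g : G, ∀ v ∈ T, Matrix.mulVec (ρ g : Matrix (Fin 2) (Fin 2) K) v ∈ T

/-- The set `X(ρ)` of vertices fixed by `G`. -/
def fixedVtx (ρ : G →* GL (Fin 2) K) : Set (BTVtx O K) :=
  {x | ∃ T : BTLat O K, BTcls T = x ∧ BTStable ρ T.1}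

set_option linter.unusedSectionVars false

namespace BTAux

variable {O : Type*} [CommRing O] [IsDomain O] [IsDiscreteValuationRing O]
  {K : Type*} [Field K] [Algebra O K] [IsFractionRing O K]
variable {G : Type*} [Group G]

lemma mem_usmul {c : Kˣ} {N : Submodule O (Fin 2 → K)} {v : Fin 2 → K} :
    v ∈ c • N ↔ ∃ w ∈ N, c • w = v := by
  exact Submodule.mem_smul_pointwise_iff_exists v c N

lemma mem_osmul {a : O} {N : Submodule O (Fin 2 → K)} {v : Fin 2 → K} :
    v ∈ a • N ↔ ∃ w ∈ N, a • w = v := by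
  rw [← SetLike.mem_coe, Submodule.coe_pointwise_smul]
  exact Set.mem_smul_set

variable {ϖ : O}

lemma pi_ne (hϖ : Irreducible ϖ) : algebraMap O K ϖ ≠ 0 := by
  simpa using (map_ne_zero_iff _ (IsFractionRing.injective O K)).2 hϖ.ne_zero

/-- `ϖ` as a unit of `K`. -/
noncomputable def piU (hϖ : Irreducible ϖ) : Kˣ := Units.mk0 (algebraMap O K ϖ) (pi_ne (K := K) hϖ)

lemma piU_coe (hϖ : Irreducible ϖ) : ((piU (K := K) hϖ : Kˣ) : K) = algebraMap O K ϖ := rfl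

lemma osmul_eq_usmul (hϖ : Irreducible ϖ) (N : Submodule O (Fin 2 → K)) :
    ϖ • N = (piU (K := K) hϖ) • N := by
  ext v
  rw [mem_usmul, mem_osmul]
  refine exists_congr fun w => and_congr_right fun _ => ?_
  rw [Units.smul_def, piU_coe, algebraMap_smul]

end BTAux
namespace BTAux
section C2

variable {O : Type*} [CommRing O] [IsDomain O] [IsDiscreteValuationRing O]
  {K : Type*} [Field K] [Algebra O K] [IsFractionRing O K]
variable {G : Type*} [Group G]
variable {ϖ : O}

/-- The homothety relation is an equivalence. -/
lemma rel_equiv : Equivalence (fun T T' : BTLat O K => ∃ c : Kˣ, T'.1 = c • T.1) := by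
  constructor
  · exact fun T => ⟨1, (one_smul _ _).symm⟩
  · rintro T T' ⟨c, h⟩
    exact ⟨c⁻¹, by rw [h, inv_smul_smul]⟩
  · rintro T T' T'' ⟨c, h⟩ ⟨d, h'⟩
    exact ⟨d * c, by rw [h', h, smul_smul]⟩

lemma cls_eq_iff {T T' : BTLat O K} : BTcls T = BTcls T' ↔ ∃ c : Kˣ, T'.1 = c • T.1 :=
  ⟨fun h => (rel_equiv.eqvGen_iff).1 (Quot.eqvGen_exact h), fun h => Quot.sound h⟩

lemma stable_mono {ρ : G →* GL (Fin 2) K} {N : Submodule O (Fin 2 → K)}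
    (hN : BTStable ρ N) (c : Kˣ) : BTStable ρ (c • N) := by
  intro g v hv
  obtain ⟨w, hw, rfl⟩ := mem_usmul.1 hv
  rw [Units.smul_def, Matrix.mulVec_smul]
  exact mem_usmul.2 ⟨_, hN g w hw, rfl⟩

lemma mulVec_osmul (M : Matrix (Fin 2) (Fin 2) K) (p : O) (v : Fin 2 → K) :
    Matrix.mulVec M (p • v) = p • Matrix.mulVec M v := by
  rw [← algebraMap_smul K p v, Matrix.mulVec_smul, algebraMap_smul]

lemma stable_osmul {ρ : G →* GL (Fin 2) K} {N : Submodule O (Fin 2 → K)}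
    (hN : BTStable ρ N) : BTStable ρ (ϖ • N) := by
  intro g v hv
  obtain ⟨w, hw, rfl⟩ := mem_osmul.1 hv
  rw [mulVec_osmul]
  exact mem_osmul.2 ⟨_, hN g w hw, rfl⟩

/-- scaling a lattice -/
lemma lat_usmul (T : BTLat O K) (c : Kˣ) : ∃ L : BTLat O K, L.1 = c • T.1 := by
  refine ⟨⟨c • T.1, ?_, ?_⟩, rfl⟩
  · have : c • T.1 = T.1.map (DistribMulAction.toLinearMap O (Fin 2 → K) c) := rfl
    rw [this]
    exact T.2.1.map _
  · have : (c • T.1 : Submodule O (Fin 2 → K)) =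
        ((c : K) • (T.1 : Set (Fin 2 → K)) : Set (Fin 2 → K)) := by
      rfl
    rw [this]
    have h1 : ((c : K) • (T.1 : Set (Fin 2 → K)) : Set (Fin 2 → K)) =
        (DistribMulAction.toLinearMap K (Fin 2 → K) (c : K)) '' T.1 := rfl
    rw [h1, ← Submodule.map_span, T.2.2, Submodule.map_top, LinearMap.range_eq_top]
    intro v
    exact ⟨(c : K)⁻¹ • v, show (c : K) • ((c : K)⁻¹ • v) = v by
      rw [smul_smul, mul_inv_cancel₀ (Units.ne_zero c), one_smul]⟩

/-- A submodule sandwiched between `ϖ•T` and `T` is a lattice. -/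
lemma lat_mid (hϖ : Irreducible ϖ) (T : BTLat O K) (A : Submodule O (Fin 2 → K))
    (h1 : ϖ • T.1 ≤ A) (h2 : A ≤ T.1) : ∃ L : BTLat O K, L.1 = A := by
  have hTfin : Module.Finite O T.1 := Module.Finite.iff_fg.2 T.2.1
  have hnoeth : IsNoetherian O T.1 := isNoetherian_of_isNoetherianRing_of_finite O T.1
  refine ⟨⟨A, ?_, ?_⟩, rfl⟩
  · have hfg : (A.comap T.1.subtype).FG := (isNoetherian_def.1 hnoeth) _
    have := hfg.map T.1.subtype
    rwa [Submodule.map_comap_subtype, inf_eq_right.2 h2] at this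
  · refine top_unique ?_
    rw [← T.2.2]
    refine Submodule.span_le.2 fun v hv => ?_
    have h3 : ϖ • v ∈ A := h1 (mem_osmul.2 ⟨v, hv, rfl⟩)
    have h4 : ϖ • v ∈ Submodule.span K (A : Set (Fin 2 → K)) := Submodule.subset_span h3
    have h5 : (algebraMap O K ϖ)⁻¹ • ϖ • v ∈ Submodule.span K (A : Set (Fin 2 → K)) :=
      Submodule.smul_mem _ _ h4
    rwa [← algebraMap_smul K ϖ v, smul_smul, inv_mul_cancel₀ (pi_ne hϖ), one_smul] at h5

/-- Integrality: an element of `K` multiplying a lattice into itself lies in `O`. -/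
lemma scalar_mem (T : BTLat O K) (x : K) (hx : ∀ v ∈ T.1, x • v ∈ T.1) :
    ∃ o : O, algebraMap O K o = x := by
  have hbot : T.1 ≠ ⊥ := by
    intro h
    have h2 := T.2.2
    rw [h, Submodule.bot_coe, Submodule.span_zero_singleton] at h2
    exact bot_ne_top h2
  have hint : IsIntegral O x :=
    isIntegral_of_smul_mem_submodule T.1 hbot T.2.1 x hx
  exact IsIntegrallyClosed.isIntegral_iff.1 hint

end C2
end BTAux
namespace BTAux
section C3

variable {O : Type*} [CommRing O] [IsDomain O] [IsDiscreteValuationRing O]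
  {K : Type*} [Field K] [Algebra O K] [IsFractionRing O K]
variable {G : Type*} [Group G]
variable {ϖ : O}

lemma unit_or_dvd (hϖ : Irreducible ϖ) (o : O) : IsUnit o ∨ ϖ ∣ o := by
  by_cases h : IsUnit o
  · exact Or.inl h
  · right
    have h1 : o ∈ IsLocalRing.maximalIdeal O := (IsLocalRing.mem_maximalIdeal o).2 h
    rw [(IsDiscreteValuationRing.irreducible_iff_uniformizer ϖ).1 hϖ,
      Ideal.mem_span_singleton] at h1
    exact h1

variable {T : BTLat O K} {A B : Submodule O (Fin 2 → K)}

lemma mem_usmul_self {c : Kˣ} {N : Submodule O (Fin 2 → K)} {v : Fin 2 → K} (h : v ∈ N) :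
    c • v ∈ c • N := mem_usmul.2 ⟨v, h, rfl⟩

lemma usmul_inv_mem {c : Kˣ} {N : Submodule O (Fin 2 → K)} {v : Fin 2 → K} (h : v ∈ c • N) :
    c⁻¹ • v ∈ N := by
  obtain ⟨w, hw, rfl⟩ := mem_usmul.1 h
  rwa [inv_smul_smul]

lemma unit_osmul_mem {u : Oˣ} {N : Submodule O (Fin 2 → K)} {v : Fin 2 → K}
    (h : (u : O) • v ∈ N) : v ∈ N := by
  have := N.smul_mem (↑u⁻¹ : O) h
  rwa [smul_smul, Units.inv_mul, one_smul] at this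

/-- Rigidity: a strictly intermediate submodule is not homothetic to `T`. -/
lemma rigid_T (hϖ : Irreducible ϖ)
    (h1 : ϖ • T.1 ≤ A) (h2 : A ≤ T.1) (h3 : A ≠ ϖ • T.1) (h4 : A ≠ T.1) :
    ∀ c : Kˣ, T.1 ≠ c • A := by
  intro c heq
  obtain ⟨LA, hLA⟩ := lat_mid hϖ T A h1 h2
  have hstab1 : ∀ v ∈ A, ((c : K)⁻¹ : K) • v ∈ A := by
    intro v hv
    have hvT : v ∈ c • A := heq ▸ h2 hv
    have := usmul_inv_mem hvT
    simpa [Units.smul_def] using this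
  have hstab2 : ∀ v ∈ A, (algebraMap O K ϖ * (c : K)) • v ∈ A := by
    intro v hv
    have hcv : (c : K) • v ∈ T.1 := by
      rw [heq]
      simpa [Units.smul_def] using mem_usmul_self (c := c) hv
    have : ϖ • ((c : K) • v) ∈ ϖ • T.1 := mem_osmul.2 ⟨_, hcv, rfl⟩
    have h5 := h1 this
    rwa [← algebraMap_smul K ϖ, smul_smul] at h5
  obtain ⟨o₁, ho₁⟩ := scalar_mem LA ((c : K)⁻¹) (by rw [hLA]; exact hstab1)
  obtain ⟨o₂, ho₂⟩ := scalar_mem LA (algebraMap O K ϖ * (c : K)) (by rw [hLA]; exact hstab2)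
  have hprod : o₁ * o₂ = ϖ := by
    apply IsFractionRing.injective O K
    rw [map_mul, ho₁, ho₂]
    field_simp
  rcases hϖ.isUnit_or_isUnit hprod.symm with hu | hu
  · obtain ⟨u, rfl⟩ := hu
    apply h4
    refine le_antisymm h2 fun v hv => ?_
    have hv' : ((c : K)⁻¹ : K) • v ∈ A := by
      rw [heq] at hv
      simpa [Units.smul_def] using usmul_inv_mem hv
    have : (↑u : O) • v ∈ A := by
      rwa [← algebraMap_smul K (↑u : O) v, ho₁]
    exact unit_osmul_mem this
  · obtain ⟨u, rfl⟩ := hu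
    apply h3
    refine le_antisymm (fun v hv => ?_) h1
    have : (↑u : O) • v ∈ ϖ • T.1 := by
      rw [← algebraMap_smul K (↑u : O) v, ho₂]
      have hcv : (c : K) • v ∈ T.1 := by
        rw [heq]
        simpa [Units.smul_def] using mem_usmul_self (c := c) hv
      have h6 : ϖ • ((c : K) • v) ∈ ϖ • T.1 := mem_osmul.2 ⟨_, hcv, rfl⟩
      rwa [← algebraMap_smul K ϖ, smul_smul] at h6
    exact unit_osmul_mem this

/-- Rigidity: two homothetic strictly intermediate submodules are equal. -/
lemma rigid_two (hϖ : Irreducible ϖ)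
    (hA1 : ϖ • T.1 ≤ A) (hA2 : A ≤ T.1) (hA3 : A ≠ ϖ • T.1) (hA4 : A ≠ T.1)
    (hB1 : ϖ • T.1 ≤ B) (hB2 : B ≤ T.1) (hB3 : B ≠ ϖ • T.1) (hB4 : B ≠ T.1) :
    ∀ c : Kˣ, B = c • A → A = B := by
  intro c heq
  obtain ⟨LA, hLA⟩ := lat_mid hϖ T A hA1 hA2
  have hstab1 : ∀ v ∈ A, (algebraMap O K ϖ * (c : K)) • v ∈ A := by
    intro v hv
    have hcv : (c : K) • v ∈ T.1 := hB2 (heq ▸ (by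
      simpa [Units.smul_def] using mem_usmul_self (c := c) hv))
    have h5 : ϖ • ((c : K) • v) ∈ ϖ • T.1 := mem_osmul.2 ⟨_, hcv, rfl⟩
    have h6 := hA1 h5
    rwa [← algebraMap_smul K ϖ, smul_smul] at h6
  have hstab2 : ∀ v ∈ A, (algebraMap O K ϖ * ((c : K)⁻¹ : K)) • v ∈ A := by
    intro v hv
    have h5 : ϖ • v ∈ B := hB1 (mem_osmul.2 ⟨_, hA2 hv, rfl⟩)
    rw [heq] at h5
    have := usmul_inv_mem h5
    rwa [Units.smul_def, Units.val_inv_eq_inv_val, ← algebraMap_smul K ϖ v, smul_smul,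
      mul_comm] at this
  obtain ⟨o₁, ho₁⟩ := scalar_mem LA _ (by rw [hLA]; exact hstab1)
  obtain ⟨o₂, ho₂⟩ := scalar_mem LA _ (by rw [hLA]; exact hstab2)
  have hprod : o₁ * o₂ = ϖ * ϖ := by
    apply IsFractionRing.injective O K
    rw [map_mul, ho₁, ho₂, map_mul]
    field_simp
  rcases unit_or_dvd hϖ o₁ with hu | ⟨o₁', rfl⟩
  · -- o₁ unit : T ≤ B, contradiction with hB4
    obtain ⟨u, rfl⟩ := hu
    exfalso
    apply hB4
    refine le_antisymm hB2 fun t ht => ?_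
    have hw : ((↑u⁻¹ : O) • t) ∈ T.1 := T.1.smul_mem _ ht
    have h5 : ϖ • ((↑u⁻¹ : O) • t) ∈ A := hA1 (mem_osmul.2 ⟨_, hw, rfl⟩)
    have h6 : (c : K) • (ϖ • ((↑u⁻¹ : O) • t)) ∈ B := by
      rw [heq]
      simpa [Units.smul_def] using mem_usmul_self (c := c) h5
    have key : (c : K) * algebraMap O K ϖ * algebraMap O K (↑u⁻¹ : O) = 1 := by
      have h8 : (c : K) * algebraMap O K ϖ = algebraMap O K (↑u : O) := by
        rw [ho₁, mul_comm]
      rw [h8, ← map_mul, Units.mul_inv, map_one]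
    have h7 : (c : K) • (ϖ • ((↑u⁻¹ : O) • t)) = t := by
      rw [← algebraMap_smul K ϖ, ← algebraMap_smul K (↑u⁻¹ : O), smul_smul, smul_smul]
      rw [key, one_smul]
    rwa [h7] at h6
  · -- ϖ ∣ o₁
    have hcan : ϖ = o₁' * o₂ := by
      have h9 : ϖ * ϖ = ϖ * (o₁' * o₂) := by rw [← hprod]; ring
      exact mul_left_cancel₀ hϖ.ne_zero h9
    rcases hϖ.isUnit_or_isUnit hcan with hu' | hu'
    · -- o₁' unit : c comes from a unit of O, so A = B
      obtain ⟨u, rfl⟩ := hu'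
      have hc : algebraMap O K (↑u : O) = (c : K) := by
        have h8 : algebraMap O K ϖ * algebraMap O K (↑u : O)
            = algebraMap O K ϖ * (c : K) := by
          rw [← map_mul, ho₁]
        exact mul_left_cancel₀ (pi_ne hϖ) h8
      apply le_antisymm
      · intro v hv
        rw [heq]
        refine mem_usmul.2 ⟨(↑u⁻¹ : O) • v, A.smul_mem _ hv, ?_⟩
        rw [Units.smul_def, ← algebraMap_smul K (↑u⁻¹ : O) v, smul_smul, ← hc,
          ← map_mul, Units.mul_inv, map_one, one_smul]
      · intro v hv
        rw [heq] at hv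
        obtain ⟨w, hw, rfl⟩ := mem_usmul.1 hv
        rw [Units.smul_def, ← hc, algebraMap_smul]
        exact A.smul_mem _ hw
    · -- o₂ unit : B = ϖT, contradiction
      obtain ⟨u, rfl⟩ := hu'
      exfalso
      apply hB3
      refine le_antisymm (fun v hv => ?_) hB1
      rw [heq] at hv
      obtain ⟨w, hw, rfl⟩ := mem_usmul.1 hv
      have hwT : ((↑u⁻¹ : O) • w) ∈ T.1 := T.1.smul_mem _ (hA2 hw)
      refine mem_osmul.2 ⟨_, hwT, ?_⟩
      have hinv : algebraMap O K (↑u⁻¹ : O) = (algebraMap O K (↑u : O))⁻¹ :=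
        eq_inv_of_mul_eq_one_left (by rw [← map_mul, Units.inv_mul, map_one])
      rw [← algebraMap_smul K ϖ, ← algebraMap_smul K (↑u⁻¹ : O) w, smul_smul,
        Units.smul_def, hinv, ho₂]
      congr 1
      rw [mul_inv, inv_inv, ← mul_assoc, mul_inv_cancel₀ (pi_ne hϖ), one_mul]

end C3
end BTAux
namespace BTAux
section C4

variable {O : Type*} [CommRing O] [IsDomain O] [IsDiscreteValuationRing O]
  {K : Type*} [Field K] [Algebra O K] [IsFractionRing O K]
variable {G : Type*} [Group G]
variable {ϖ : O}

lemma usmul_mono {c : Kˣ} {N M : Submodule O (Fin 2 → K)} (h : N ≤ M) : c • N ≤ c • M := by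
  intro v hv
  obtain ⟨w, hw, rfl⟩ := mem_usmul.1 hv
  exact mem_usmul.2 ⟨w, h hw, rfl⟩

lemma osmul_mono {N M : Submodule O (Fin 2 → K)} (h : N ≤ M) : ϖ • N ≤ ϖ • M := by
  intro v hv
  obtain ⟨w, hw, rfl⟩ := mem_osmul.1 hv
  exact mem_osmul.2 ⟨w, h hw, rfl⟩

lemma osmul_usmul (hϖ : Irreducible ϖ) (c : Kˣ) (N : Submodule O (Fin 2 → K)) :
    ϖ • (c • N) = c • (ϖ • N) := by
  rw [osmul_eq_usmul hϖ, osmul_eq_usmul hϖ, smul_smul, smul_smul, mul_comm]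

/-- Characterization of neighbors of `[T]` lying in `X(ρ)`. -/
lemma neighbor_iff (hϖ : Irreducible ϖ) (ρ : G →* GL (Fin 2) K) (T : BTLat O K)
    (y : BTVtx O K) :
    (y ∈ fixedVtx ρ ∧ (BTtree O K ϖ).Adj (BTcls T) y) ↔
    ∃ A : BTLat O K, BTStable ρ A.1 ∧ ϖ • T.1 < A.1 ∧ A.1 < T.1 ∧ BTcls A = y := by
  constructor
  · rintro ⟨⟨S, hSy, hSstab⟩, hne, hcase⟩
    have main : ∃ A : BTLat O K, BTStable ρ A.1 ∧ ϖ • T.1 ≤ A.1 ∧ A.1 ≤ T.1 ∧ BTcls A = y := by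
      rcases hcase with ⟨T₀, T₀', hT₀, hT₀', hlow, hhigh⟩ | ⟨T₀, T₀', hT₀, hT₀', hlow, hhigh⟩
      · obtain ⟨c, hc⟩ := cls_eq_iff.1 hT₀
        obtain ⟨d, hd⟩ := cls_eq_iff.1 (hT₀'.trans hSy.symm)
        have hT₀'eq : T₀'.1 = d⁻¹ • S.1 := by rw [hd, inv_smul_smul]
        have hT₀'stab : BTStable ρ T₀'.1 := by
          rw [hT₀'eq]; exact stable_mono hSstab d⁻¹
        obtain ⟨A, hA⟩ := lat_usmul T₀' c
        refine ⟨A, by rw [hA]; exact stable_mono hT₀'stab c, ?_, ?_, ?_⟩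
        · rw [hA, hc, osmul_usmul hϖ]
          exact usmul_mono hlow
        · rw [hA, hc]
          exact usmul_mono hhigh
        · exact (Quot.sound ⟨c, hA⟩ : BTcls T₀' = BTcls A).symm.trans hT₀'
      · obtain ⟨c, hc⟩ := cls_eq_iff.1 hT₀'
        obtain ⟨d, hd⟩ := cls_eq_iff.1 (hT₀.trans hSy.symm)
        have hT₀stab : BTStable ρ T₀.1 := by
          have : T₀.1 = d⁻¹ • S.1 := by rw [hd, inv_smul_smul]
          rw [this]; exact stable_mono hSstab d⁻¹
        obtain ⟨A, hA⟩ := lat_usmul T₀ (piU (K := K) hϖ * c)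
        have hA' : A.1 = c • (piU (K := K) hϖ • T₀.1) := by rw [hA, smul_smul, mul_comm]
        refine ⟨A, by rw [hA]; exact stable_mono hT₀stab _, ?_, ?_, ?_⟩
        · rw [hA', ← osmul_eq_usmul hϖ, hc, osmul_usmul hϖ]
          exact usmul_mono (osmul_mono hhigh)
        · rw [hA', ← osmul_eq_usmul hϖ, hc]
          exact usmul_mono (by rw [osmul_eq_usmul hϖ]; rw [osmul_eq_usmul hϖ] at hlow; exact hlow)
        · exact (Quot.sound ⟨piU (K := K) hϖ * c, hA⟩ : BTcls T₀ = BTcls A).symm.trans hT₀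
    obtain ⟨A, hst, h1, h2, hcls⟩ := main
    have hne1 : A.1 ≠ T.1 := by
      intro h
      exact hne (by rw [← hcls]; exact (Quot.sound ⟨1, by rw [h, one_smul]⟩ : BTcls T = BTcls A))
    have hne2 : A.1 ≠ ϖ • T.1 := by
      intro h
      apply hne
      rw [← hcls]
      exact (Quot.sound ⟨piU (K := K) hϖ, by rw [h, osmul_eq_usmul hϖ]⟩ : BTcls T = BTcls A)
    exact ⟨A, hst, lt_of_le_of_ne h1 (fun h => hne2 h.symm), lt_of_le_of_ne h2 hne1, hcls⟩
  · rintro ⟨A, hst, h1, h2, hcls⟩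
    refine ⟨⟨A, hcls, hst⟩, ?_, Or.inl ⟨T, A, rfl, hcls, le_of_lt h1, le_of_lt h2⟩⟩
    intro h
    rw [← hcls] at h
    obtain ⟨c, hc⟩ := cls_eq_iff.1 h
    have : T.1 = c⁻¹ • A.1 := by rw [hc, inv_smul_smul]
    exact rigid_T hϖ (le_of_lt h1) (le_of_lt h2) h1.ne' h2.ne c⁻¹ this

end C4
end BTAux
namespace BTAux
section C5

variable {O : Type*} [CommRing O] [IsDomain O] [IsDiscreteValuationRing O]
  {K : Type*} [Field K] [Algebra O K] [IsFractionRing O K]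

/-- Every lattice has an `O`-basis of two vectors, `K`-linearly independent. -/
lemma exists_basis (T : BTLat O K) : ∃ e0 e1 : Fin 2 → K,
    (∀ v, v ∈ T.1 ↔ ∃ a b : O, v = a • e0 + b • e1) ∧
    (∀ a b : O, a • e0 + b • e1 = 0 → a = 0 ∧ b = 0) := by
  have hTfin : Module.Finite O T.1 := Module.Finite.iff_fg.2 T.2.1
  have htf : NoZeroSMulDivisors O T.1 := by
    refine ⟨fun {a x} h => ?_⟩
    have h2 : a • (x : Fin 2 → K) = 0 := by
      have := congrArg (Subtype.val) h
      simpa using this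
    rw [← algebraMap_smul K a (x : Fin 2 → K), smul_eq_zero] at h2
    rcases h2 with h2 | h2
    · exact Or.inl ((map_eq_zero_iff _ (IsFractionRing.injective O K)).1 h2)
    · exact Or.inr (Subtype.ext h2)
  let b := Module.Free.chooseBasis O T.1
  set ι := Module.Free.ChooseBasisIndex O T.1 with hι
  let e' : ι → (Fin 2 → K) := fun i => (b i : Fin 2 → K)
  have hliO : LinearIndependent O e' := by
    have := b.linearIndependent.map' T.1.subtype (Submodule.ker_subtype T.1)
    exact this
  have hliK : LinearIndependent K e' := (LinearIndependent.iff_fractionRing O K).1 hliO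
  have hspanO : Submodule.span O (Set.range e') = T.1 := by
    have h1 : Set.range e' = T.1.subtype '' Set.range b := by
      rw [← Set.range_comp]; rfl
    rw [h1, ← Submodule.map_span, b.span_eq, Submodule.map_subtype_top]
  have hspanK : Submodule.span K (Set.range e') = ⊤ := by
    refine top_unique ?_
    rw [← T.2.2]
    refine Submodule.span_le.2 fun v hv => ?_
    rw [← hspanO] at hv
    refine Submodule.span_induction (fun x hx => Submodule.subset_span hx)
      (Submodule.zero_mem _) (fun x y _ _ hx hy => Submodule.add_mem _ hx hy)
      (fun a x _ hx => ?_) hv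
    rw [← algebraMap_smul K a x]
    exact Submodule.smul_mem _ _ hx
  have bK : Module.Basis ι K (Fin 2 → K) := Module.Basis.mk hliK (by rw [hspanK])
  have hcard : Fintype.card ι = 2 := by
    have := Module.finrank_eq_card_basis bK
    rw [Module.finrank_fin_fun] at this
    omega
  let σ : Fin 2 ≃ ι := (Fintype.equivFinOfCardEq hcard).symm
  refine ⟨e' (σ 0), e' (σ 1), ?_, ?_⟩
  · intro v
    have hrange : Set.range e' = {e' (σ 0), e' (σ 1)} := by
      ext x
      simp only [Set.mem_range, Set.mem_insert_iff, Set.mem_singleton_iff]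
      constructor
      · rintro ⟨i, rfl⟩
        rcases (by omega : σ.symm i = 0 ∨ σ.symm i = 1) with h | h <;>
          [left; right] <;> rw [← σ.apply_symm_apply i, h]
      · rintro (rfl | rfl) <;> [exact ⟨σ 0, rfl⟩; exact ⟨σ 1, rfl⟩]
    rw [← hspanO, hrange, Submodule.mem_span_pair]
    constructor
    · rintro ⟨a, b', h⟩; exact ⟨a, b', h.symm⟩
    · rintro ⟨a, b', h⟩; exact ⟨a, b', h.symm⟩
  · intro a b' h
    have hliK2 : LinearIndependent K (fun i : Fin 2 => e' (σ i)) :=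
      hliK.comp σ σ.injective
    have hsum : ∑ i : Fin 2, (![algebraMap O K a, algebraMap O K b'] i) • e' (σ i) = 0 := by
      rw [Fin.sum_univ_two]
      simp only [Matrix.cons_val_zero, Matrix.cons_val_one, Matrix.head_cons]
      rw [algebraMap_smul, algebraMap_smul]
      exact h
    have key := Fintype.linearIndependent_iff.1 hliK2 _ hsum
    have k0 := key 0
    have k1 := key 1
    simp only [Matrix.cons_val_zero, Matrix.cons_val_one, Matrix.head_cons] at k0 k1
    exact ⟨(map_eq_zero_iff _ (IsFractionRing.injective O K)).1 k0,
      (map_eq_zero_iff _ (IsFractionRing.injective O K)).1 k1⟩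

end C5
end BTAux
namespace BTAux
section C6

variable {O : Type*} [CommRing O] [IsDomain O] [IsDiscreteValuationRing O]
  {K : Type*} [Field K] [Algebra O K] [IsFractionRing O K]
variable {G : Type*} [Group G]
variable {ϖ : O} {Tm : Submodule O (Fin 2 → K)} {e0 e1 : Fin 2 → K}

/-- Coordinates are unique. -/
lemma coord_unique (hz : ∀ a b : O, a • e0 + b • e1 = 0 → a = 0 ∧ b = 0)
    {a b a' b' : O} (h : a • e0 + b • e1 = a' • e0 + b' • e1) : a = a' ∧ b = b' := by
  have h0 : (a - a') • e0 + (b - b') • e1 = 0 := by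
    rw [sub_smul, sub_smul]
    rw [← sub_eq_zero] at h
    rw [← h]; abel
  obtain ⟨h1, h2⟩ := hz _ _ h0
  exact ⟨sub_eq_zero.1 h1, sub_eq_zero.1 h2⟩

lemma mem_osmul_coord (hmem : ∀ v, v ∈ Tm ↔ ∃ a b : O, v = a • e0 + b • e1)
    {v : Fin 2 → K} : v ∈ ϖ • Tm ↔ ∃ a b : O, v = (ϖ * a) • e0 + (ϖ * b) • e1 := by
  rw [mem_osmul]
  constructor
  · rintro ⟨w, hw, rfl⟩
    obtain ⟨a, b, rfl⟩ := (hmem w).1 hw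
    exact ⟨a, b, by rw [smul_add, smul_smul, smul_smul]⟩
  · rintro ⟨a, b, rfl⟩
    exact ⟨a • e0 + b • e1, (hmem _).2 ⟨a, b, rfl⟩, by rw [smul_add, smul_smul, smul_smul]⟩

lemma coord_mem_osmul (hmem : ∀ v, v ∈ Tm ↔ ∃ a b : O, v = a • e0 + b • e1)
    (hz : ∀ a b : O, a • e0 + b • e1 = 0 → a = 0 ∧ b = 0)
    {a b : O} : a • e0 + b • e1 ∈ ϖ • Tm ↔ ϖ ∣ a ∧ ϖ ∣ b := by
  rw [mem_osmul_coord hmem]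
  constructor
  · rintro ⟨a', b', h⟩
    obtain ⟨h1, h2⟩ := coord_unique hz h
    exact ⟨⟨a', h1⟩, ⟨b', h2⟩⟩
  · rintro ⟨⟨a', rfl⟩, ⟨b', rfl⟩⟩
    exact ⟨a', b', rfl⟩

/-- Core of the covering lemma, assuming the first coordinate of `a` is a unit. -/
lemma cover_core (hϖ : Irreducible ϖ)
    (hmem : ∀ v, v ∈ Tm ↔ ∃ a b : O, v = a • e0 + b • e1)
    {A : Submodule O (Fin 2 → K)} (hlow : ϖ • Tm ≤ A) (hup : A ≤ Tm) (hne : A ≠ Tm)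
    {a : Fin 2 → K} (haA : a ∈ A) {u : Oˣ} {y : O} (ha : a = (↑u : O) • e0 + y • e1) :
    ∀ v ∈ A, ∃ s : O, v - s • a ∈ ϖ • Tm := by
  intro v hv
  obtain ⟨s, t, hvc⟩ := (hmem v).1 (hup hv)
  refine ⟨s * ↑u⁻¹, ?_⟩
  have hcalc : v - (s * ↑u⁻¹) • a = (s - s * ↑u⁻¹ * ↑u) • e0 + (t - s * ↑u⁻¹ * y) • e1 := by
    rw [hvc, ha]; module
  have hzero : s - s * ↑u⁻¹ * ↑u = 0 := by
    rw [Units.inv_mul_cancel_right, sub_self]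
  rw [hzero, zero_smul, zero_add] at hcalc
  rcases unit_or_dvd hϖ (t - s * ↑u⁻¹ * y) with hu | ⟨r, hr⟩
  · exfalso
    obtain ⟨w, hw⟩ := hu
    have hvA : v - (s * ↑u⁻¹) • a ∈ A := A.sub_mem hv (A.smul_mem _ haA)
    have he1 : e1 ∈ A := by
      have : (↑w⁻¹ : O) • (v - (s * ↑u⁻¹) • a) ∈ A := A.smul_mem _ hvA
      rwa [hcalc, ← hw, smul_smul, Units.inv_mul, one_smul] at this
    have he0 : e0 ∈ A := by
      have h1 : (↑u⁻¹ : O) • (a - y • e1) ∈ A := A.smul_mem _ (A.sub_mem haA (A.smul_mem _ he1))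
      have h2 : a - y • e1 = (↑u : O) • e0 := by rw [ha]; abel
      rwa [h2, smul_smul, Units.inv_mul, one_smul] at h1
    apply hne
    refine le_antisymm hup fun w hw' => ?_
    obtain ⟨p, q, rfl⟩ := (hmem w).1 hw'
    exact A.add_mem (A.smul_mem _ he0) (A.smul_mem _ he1)
  · rw [hcalc, hr, mul_smul]
    exact mem_osmul.2 ⟨r • e1, (hmem _).2 ⟨0, r, by rw [zero_smul, zero_add]⟩, rfl⟩

/-- The swapped-coordinates membership criterion. -/
lemma hmem_swap (hmem : ∀ v, v ∈ Tm ↔ ∃ a b : O, v = a • e0 + b • e1) :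
    ∀ v, v ∈ Tm ↔ ∃ a b : O, v = a • e1 + b • e0 := by
  intro v
  rw [hmem v]
  constructor
  · rintro ⟨a, b, rfl⟩; exact ⟨b, a, by abel⟩
  · rintro ⟨a, b, rfl⟩; exact ⟨b, a, by abel⟩

/-- The covering lemma: any element of a strictly intermediate module generates it mod `ϖT`. -/
lemma cover (hϖ : Irreducible ϖ)
    (hmem : ∀ v, v ∈ Tm ↔ ∃ a b : O, v = a • e0 + b • e1)
    (hz : ∀ a b : O, a • e0 + b • e1 = 0 → a = 0 ∧ b = 0)
    {A : Submodule O (Fin 2 → K)} (hlow : ϖ • Tm ≤ A) (hup : A ≤ Tm) (hne : A ≠ Tm)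
    {a : Fin 2 → K} (haA : a ∈ A) (hanot : a ∉ ϖ • Tm) :
    ∀ v ∈ A, ∃ s : O, v - s • a ∈ ϖ • Tm := by
  obtain ⟨x, y, ha⟩ := (hmem a).1 (hup haA)
  have hnd : ¬ (ϖ ∣ x ∧ ϖ ∣ y) := fun h => hanot (ha ▸ (coord_mem_osmul hmem hz).2 h)
  rcases unit_or_dvd hϖ x with ⟨u, rfl⟩ | hdx
  · exact cover_core hϖ hmem hlow hup hne haA ha
  · rcases unit_or_dvd hϖ y with ⟨u, rfl⟩ | hdy
    · exact cover_core hϖ (hmem_swap hmem) hlow hup hne haA (by rw [ha]; abel)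
    · exact absurd ⟨hdx, hdy⟩ hnd

end C6
end BTAux
namespace BTAux
section C7

variable {O : Type*} [CommRing O] [IsDomain O] [IsDiscreteValuationRing O]
  {K : Type*} [Field K] [Algebra O K] [IsFractionRing O K]
variable {G : Type*} [Group G]
variable {ϖ : O} {Tm : Submodule O (Fin 2 → K)} {e0 e1 : Fin 2 → K}

/-- If the "determinant" of two vectors is divisible by `ϖ` and the first is primitive,
the second is a multiple of the first mod `ϖT`. -/
lemma dep_of_dvd_det (hϖ : Irreducible ϖ)
    (hmem : ∀ v, v ∈ Tm ↔ ∃ a b : O, v = a • e0 + b • e1)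
    (hz : ∀ a b : O, a • e0 + b • e1 = 0 → a = 0 ∧ b = 0)
    {a b : Fin 2 → K} {x y s t : O}
    (ha : a = x • e0 + y • e1) (hb : b = s • e0 + t • e1)
    (hdet : ϖ ∣ (x * t - y * s)) (hnx : ¬ (ϖ ∣ x ∧ ϖ ∣ y)) :
    ∃ c : O, b - c • a ∈ ϖ • Tm := by
  rcases unit_or_dvd hϖ x with ⟨u, rfl⟩ | hdx
  · refine ⟨s * ↑u⁻¹, ?_⟩
    have hcalc : b - (s * ↑u⁻¹) • a =
        (s - s * ↑u⁻¹ * ↑u) • e0 + (t - s * ↑u⁻¹ * y) • e1 := by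
      rw [ha, hb]; module
    have h1 : s - s * ↑u⁻¹ * ↑u = 0 := by rw [Units.inv_mul_cancel_right, sub_self]
    have h4 : ϖ ∣ ↑u * (t - s * ↑u⁻¹ * y) := by
      have hr : (↑u : O) * (t - s * ↑u⁻¹ * y) =
          (↑u * t - y * s) + (s - s * ↑u⁻¹ * ↑u) * y := by ring
      rw [hr, h1, zero_mul, add_zero]
      exact hdet
    have h2 : ϖ ∣ (t - s * ↑u⁻¹ * y) := by
      have h5 := h4.mul_left (↑u⁻¹ : O)
      rwa [← mul_assoc, Units.inv_mul, one_mul] at h5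
    rw [hcalc, h1, zero_smul, zero_add]
    have hform : (t - s * ↑u⁻¹ * y) • e1 = (0 : O) • e0 + (t - s * ↑u⁻¹ * y) • e1 := by
      rw [zero_smul, zero_add]
    rw [hform]
    exact (coord_mem_osmul hmem hz).2 ⟨dvd_zero ϖ, h2⟩
  · rcases unit_or_dvd hϖ y with ⟨u, rfl⟩ | hdy
    · refine ⟨t * ↑u⁻¹, ?_⟩
      have hcalc : b - (t * ↑u⁻¹) • a =
          (s - t * ↑u⁻¹ * x) • e0 + (t - t * ↑u⁻¹ * ↑u) • e1 := by
        rw [ha, hb]; module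
      have h1 : t - t * ↑u⁻¹ * ↑u = 0 := by rw [Units.inv_mul_cancel_right, sub_self]
      have h4 : ϖ ∣ ↑u * (s - t * ↑u⁻¹ * x) := by
        have hr : (↑u : O) * (s - t * ↑u⁻¹ * x) =
            -(x * t - ↑u * s) + (t - t * ↑u⁻¹ * ↑u) * x := by ring
        rw [hr, h1, zero_mul, add_zero]
        exact dvd_neg.2 hdet
      have h2 : ϖ ∣ (s - t * ↑u⁻¹ * x) := by
        have h5 := h4.mul_left (↑u⁻¹ : O)
        rwa [← mul_assoc, Units.inv_mul, one_mul] at h5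
      rw [hcalc, h1, zero_smul, add_zero]
      have hform : (s - t * ↑u⁻¹ * x) • e0 = (s - t * ↑u⁻¹ * x) • e0 + (0 : O) • e1 := by
        rw [zero_smul, add_zero]
      rw [hform]
      exact (coord_mem_osmul hmem hz).2 ⟨h2, dvd_zero ϖ⟩
    · exact absurd ⟨hdx, hdy⟩ hnx

/-- Two distinct strictly intermediate submodules are complementary mod `ϖT`. -/
lemma two_distinct (hϖ : Irreducible ϖ)
    (hmem : ∀ v, v ∈ Tm ↔ ∃ a b : O, v = a • e0 + b • e1)
    (hz : ∀ a b : O, a • e0 + b • e1 = 0 → a = 0 ∧ b = 0)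
    {A B : Submodule O (Fin 2 → K)}
    (hAl : ϖ • Tm < A) (hAu : A < Tm) (hBl : ϖ • Tm < B) (hBu : B < Tm)
    (hAB : A ≠ B) :
    A ⊓ B ≤ ϖ • Tm ∧ Tm ≤ A ⊔ B := by
  obtain ⟨a, haA, hanot⟩ := SetLike.exists_of_lt hAl
  obtain ⟨b, hbB, hbnot⟩ := SetLike.exists_of_lt hBl
  obtain ⟨x, y, ha⟩ := (hmem a).1 (le_of_lt hAu haA)
  obtain ⟨s, t, hb⟩ := (hmem b).1 (le_of_lt hBu hbB)
  have hnx : ¬ (ϖ ∣ x ∧ ϖ ∣ y) := fun h => hanot (ha ▸ (coord_mem_osmul hmem hz).2 h)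
  have hns : ¬ (ϖ ∣ s ∧ ϖ ∣ t) := fun h => hbnot (hb ▸ (coord_mem_osmul hmem hz).2 h)
  rcases unit_or_dvd hϖ (x * t - y * s) with hdet | hdet
  · -- determinant is a unit
    obtain ⟨w, hw⟩ := hdet
    constructor
    · intro m hm
      obtain ⟨α, hα⟩ := cover hϖ hmem hz (le_of_lt hAl) (le_of_lt hAu) hAu.ne haA hanot m hm.1
      obtain ⟨β, hβ⟩ := cover hϖ hmem hz (le_of_lt hBl) (le_of_lt hBu) hBu.ne hbB hbnot m hm.2
      have hdiff : α • a - β • b ∈ ϖ • Tm := by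
        have := Submodule.sub_mem _ hβ hα
        have heq : m - β • b - (m - α • a) = α • a - β • b := by abel
        rwa [heq] at this
      have hco : α • a - β • b = (α * x - β * s) • e0 + (α * y - β * t) • e1 := by
        rw [ha, hb]; module
      rw [hco] at hdiff
      obtain ⟨hd1, hd2⟩ := (coord_mem_osmul hmem hz).1 hdiff
      have hα' : ϖ ∣ α := by
        have h6 : ϖ ∣ α * ↑w := by
          have hr : α * ↑w = t * (α * x - β * s) - s * (α * y - β * t) := by
            rw [hw]; ring
          rw [hr]
          exact dvd_sub (hd1.mul_left t) (hd2.mul_left s)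
        have h7 := h6.mul_left (↑w⁻¹ : O)
        rwa [mul_comm α (↑w : O), ← mul_assoc, Units.inv_mul, one_mul] at h7
      have hβ' : ϖ ∣ β := by
        have h6 : ϖ ∣ β * ↑w := by
          have hr : β * ↑w = y * (α * x - β * s) - x * (α * y - β * t) := by
            rw [hw]; ring
          rw [hr]
          exact dvd_sub (hd1.mul_left y) (hd2.mul_left x)
        have h7 := h6.mul_left (↑w⁻¹ : O)
        rwa [mul_comm β (↑w : O), ← mul_assoc, Units.inv_mul, one_mul] at h7
      obtain ⟨α', rfl⟩ := hα'
      have hmem2 : (ϖ * α') • a ∈ ϖ • Tm := by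
        rw [mul_smul]
        exact mem_osmul.2 ⟨α' • a, Tm.smul_mem _ (le_of_lt hAu haA), rfl⟩
      have : m = (m - (ϖ * α') • a) + (ϖ * α') • a := by abel
      rw [this]
      exact Submodule.add_mem _ hα hmem2
    · intro v hv
      obtain ⟨p, q, rfl⟩ := (hmem v).1 hv
      have he0 : e0 ∈ A ⊔ B := by
        have hin : t • a - y • b ∈ A ⊔ B :=
          Submodule.sub_mem _ (Submodule.mem_sup_left (A.smul_mem _ haA))
            (Submodule.mem_sup_right (B.smul_mem _ hbB))
        have hco : t • a - y • b = (x * t - y * s) • e0 := by rw [ha, hb]; module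
        have := Submodule.smul_mem (A ⊔ B) (↑w⁻¹ : O) hin
        rwa [hco, ← hw, smul_smul, Units.inv_mul, one_smul] at this
      have he1 : e1 ∈ A ⊔ B := by
        have hin : x • b - s • a ∈ A ⊔ B :=
          Submodule.sub_mem _ (Submodule.mem_sup_right (B.smul_mem _ hbB))
            (Submodule.mem_sup_left (A.smul_mem _ haA))
        have hco : x • b - s • a = (x * t - y * s) • e1 := by rw [ha, hb]; module
        have := Submodule.smul_mem (A ⊔ B) (↑w⁻¹ : O) hin
        rwa [hco, ← hw, smul_smul, Units.inv_mul, one_smul] at this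
      exact Submodule.add_mem _ (Submodule.smul_mem _ _ he0) (Submodule.smul_mem _ _ he1)
  · -- determinant divisible by ϖ : A = B, contradiction
    exfalso
    apply hAB
    have hbA : b ∈ A := by
      obtain ⟨c, hc⟩ := dep_of_dvd_det hϖ hmem hz ha hb hdet hnx
      have : b = (b - c • a) + c • a := by abel
      rw [this]
      exact A.add_mem (le_of_lt hAl hc) (A.smul_mem _ haA)
    have haB : a ∈ B := by
      have hdet' : ϖ ∣ (s * y - t * x) := by
        have : s * y - t * x = -(x * t - y * s) := by ring
        rw [this]; exact dvd_neg.2 hdet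
      obtain ⟨c, hc⟩ := dep_of_dvd_det hϖ hmem hz hb ha hdet' hns
      have : a = (a - c • b) + c • b := by abel
      rw [this]
      exact B.add_mem (le_of_lt hBl hc) (B.smul_mem _ hbB)
    apply le_antisymm
    · intro v hv
      obtain ⟨σ, hσ⟩ := cover hϖ hmem hz (le_of_lt hAl) (le_of_lt hAu) hAu.ne haA hanot v hv
      have : v = (v - σ • a) + σ • a := by abel
      rw [this]
      exact B.add_mem (le_of_lt hBl hσ) (B.smul_mem _ haB)
    · intro v hv
      obtain ⟨σ, hσ⟩ := cover hϖ hmem hz (le_of_lt hBl) (le_of_lt hBu) hBu.ne hbB hbnot v hv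
      have : v = (v - σ • b) + σ • b := by abel
      rw [this]
      exact A.add_mem (le_of_lt hAl hσ) (A.smul_mem _ hbA)

end C7
end BTAux
namespace BTAux
section C8

variable {O : Type*} [CommRing O] [IsDomain O] [IsDiscreteValuationRing O]
  {K : Type*} [Field K] [Algebra O K] [IsFractionRing O K]
variable {G : Type*} [Group G]
variable {ϖ : O} {Tm : Submodule O (Fin 2 → K)} {e0 e1 : Fin 2 → K}

/-- From two distinct stable lines, extract a new coordinate system adapted to them. -/
lemma basis_adapted (hϖ : Irreducible ϖ)
    (hmem : ∀ v, v ∈ Tm ↔ ∃ a b : O, v = a • e0 + b • e1)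
    (hz : ∀ a b : O, a • e0 + b • e1 = 0 → a = 0 ∧ b = 0)
    {A B : Submodule O (Fin 2 → K)}
    (hAl : ϖ • Tm < A) (hAu : A < Tm) (hBl : ϖ • Tm < B) (hBu : B < Tm)
    (hAB : A ≠ B) :
    ∃ a b : Fin 2 → K, a ∈ A ∧ a ∉ ϖ • Tm ∧ b ∈ B ∧ b ∉ ϖ • Tm ∧
      (∀ v, v ∈ Tm ↔ ∃ p q : O, v = p • a + q • b) ∧
      (∀ p q : O, p • a + q • b = 0 → p = 0 ∧ q = 0) := by
  obtain ⟨a, haA, hanot⟩ := SetLike.exists_of_lt hAl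
  obtain ⟨b, hbB, hbnot⟩ := SetLike.exists_of_lt hBl
  obtain ⟨x, y, ha⟩ := (hmem a).1 (le_of_lt hAu haA)
  obtain ⟨s, t, hb⟩ := (hmem b).1 (le_of_lt hBu hbB)
  have hnx : ¬ (ϖ ∣ x ∧ ϖ ∣ y) := fun h => hanot (ha ▸ (coord_mem_osmul hmem hz).2 h)
  have hns : ¬ (ϖ ∣ s ∧ ϖ ∣ t) := fun h => hbnot (hb ▸ (coord_mem_osmul hmem hz).2 h)
  have hdet : IsUnit (x * t - y * s) := by
    rcases unit_or_dvd hϖ (x * t - y * s) with h | h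
    · exact h
    · exfalso
      apply hAB
      have hbA : b ∈ A := by
        obtain ⟨c, hc⟩ := dep_of_dvd_det hϖ hmem hz ha hb h hnx
        have hh : b = (b - c • a) + c • a := by abel
        rw [hh]
        exact A.add_mem (le_of_lt hAl hc) (A.smul_mem _ haA)
      have haB : a ∈ B := by
        have hdet' : ϖ ∣ (s * y - t * x) := by
          have hh : s * y - t * x = -(x * t - y * s) := by ring
          rw [hh]; exact dvd_neg.2 h
        obtain ⟨c, hc⟩ := dep_of_dvd_det hϖ hmem hz hb ha hdet' hns
        have hh : a = (a - c • b) + c • b := by abel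
        rw [hh]
        exact B.add_mem (le_of_lt hBl hc) (B.smul_mem _ hbB)
      apply le_antisymm
      · intro v hv
        obtain ⟨σ, hσ⟩ :=
          cover hϖ hmem hz (le_of_lt hAl) (le_of_lt hAu) hAu.ne haA hanot v hv
        have hh : v = (v - σ • a) + σ • a := by abel
        rw [hh]
        exact B.add_mem (le_of_lt hBl hσ) (B.smul_mem _ haB)
      · intro v hv
        obtain ⟨σ, hσ⟩ :=
          cover hϖ hmem hz (le_of_lt hBl) (le_of_lt hBu) hBu.ne hbB hbnot v hv
        have hh : v = (v - σ • b) + σ • b := by abel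
        rw [hh]
        exact A.add_mem (le_of_lt hAl hσ) (A.smul_mem _ hbA)
  obtain ⟨w, hw⟩ := hdet
  have he0 : e0 = (↑w⁻¹ * t) • a - (↑w⁻¹ * y) • b := by
    have h1 : t • a - y • b = (x * t - y * s) • e0 := by rw [ha, hb]; module
    have h2 := congrArg (fun z => (↑w⁻¹ : O) • z) h1
    rw [← hw, smul_smul, Units.inv_mul, one_smul, smul_sub, smul_smul, smul_smul] at h2
    exact h2.symm
  have he1 : e1 = (↑w⁻¹ * x) • b - (↑w⁻¹ * s) • a := by
    have h1 : x • b - s • a = (x * t - y * s) • e1 := by rw [ha, hb]; module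
    have h2 := congrArg (fun z => (↑w⁻¹ : O) • z) h1
    rw [← hw, smul_smul, Units.inv_mul, one_smul, smul_sub, smul_smul, smul_smul] at h2
    exact h2.symm
  refine ⟨a, b, haA, hanot, hbB, hbnot, ?_, ?_⟩
  · intro v
    constructor
    · intro hv
      obtain ⟨p, q, rfl⟩ := (hmem v).1 hv
      refine ⟨p * (↑w⁻¹ * t) - q * (↑w⁻¹ * s), q * (↑w⁻¹ * x) - p * (↑w⁻¹ * y), ?_⟩
      rw [he0, he1]; module
    · rintro ⟨p, q, rfl⟩
      exact Tm.add_mem (Tm.smul_mem _ (le_of_lt hAu haA)) (Tm.smul_mem _ (le_of_lt hBu hbB))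
  · intro p q h
    have hco : (p * x + q * s) • e0 + (p * y + q * t) • e1 = 0 := by
      rw [← h, ha, hb]; module
    obtain ⟨h1, h2⟩ := hz _ _ hco
    have hp : p * ↑w = 0 := by
      rw [hw]
      have : p * (x * t - y * s) = t * (p * x + q * s) - s * (p * y + q * t) := by ring
      rw [this, h1, h2, mul_zero, mul_zero, sub_zero]
    have hq : q * ↑w = 0 := by
      rw [hw]
      have : q * (x * t - y * s) = x * (p * y + q * t) - y * (p * x + q * s) := by ring
      rw [this, h1, h2, mul_zero, mul_zero, sub_zero]
    exact ⟨by simpa using congrArg (fun z => z * (↑w⁻¹ : O)) hp,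
      by simpa using congrArg (fun z => z * (↑w⁻¹ : O)) hq⟩

end C8
end BTAux
namespace BTAux
section C9

variable {O : Type*} [CommRing O] [IsDomain O] [IsDiscreteValuationRing O]
  {K : Type*} [Field K] [Algebra O K] [IsFractionRing O K]
variable {G : Type*} [Group G]
variable {ϖ : O} {Tm : Submodule O (Fin 2 → K)} {e0 e1 : Fin 2 → K}

/-- A stable strictly intermediate submodule carries a character mod `ϖT`. -/
lemma char_exists (hϖ : Irreducible ϖ)
    (hmem : ∀ v, v ∈ Tm ↔ ∃ a b : O, v = a • e0 + b • e1)
    (hz : ∀ a b : O, a • e0 + b • e1 = 0 → a = 0 ∧ b = 0)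
    {ρ : G →* GL (Fin 2) K} (hT : BTStable ρ Tm)
    {A : Submodule O (Fin 2 → K)} (hAl : ϖ • Tm < A) (hAu : A < Tm)
    (hA : BTStable ρ A) :
    ∃ χ : G → O, ∀ g : G, ∀ v ∈ A,
      Matrix.mulVec (ρ g : Matrix (Fin 2) (Fin 2) K) v - χ g • v ∈ ϖ • Tm := by
  obtain ⟨a, haA, hanot⟩ := SetLike.exists_of_lt hAl
  have hcov := cover hϖ hmem hz (le_of_lt hAl) (le_of_lt hAu) hAu.ne haA hanot
  have hch : ∀ g : G, ∃ s : O,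
      Matrix.mulVec (ρ g : Matrix (Fin 2) (Fin 2) K) a - s • a ∈ ϖ • Tm :=
    fun g => hcov _ (hA g a haA)
  choose χ hχ using hch
  refine ⟨χ, fun g v hv => ?_⟩
  obtain ⟨σ, hσ⟩ := hcov v hv
  have hkey : Matrix.mulVec (ρ g : Matrix (Fin 2) (Fin 2) K) v - χ g • v =
      Matrix.mulVec (ρ g : Matrix (Fin 2) (Fin 2) K) (v - σ • a) +
      σ • (Matrix.mulVec (ρ g : Matrix (Fin 2) (Fin 2) K) a - χ g • a) -
      χ g • (v - σ • a) := by
    rw [Matrix.mulVec_sub, mulVec_osmul]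
    module
  rw [hkey]
  exact Submodule.sub_mem _
    (Submodule.add_mem _ (stable_osmul hT g _ hσ) (Submodule.smul_mem _ _ (hχ g)))
    (Submodule.smul_mem _ _ hσ)

/-- With two stable lines with distinct characters, there is no third stable line. -/
lemma no_third (hϖ : Irreducible ϖ)
    {ρ : G →* GL (Fin 2) K}
    {A B C : Submodule O (Fin 2 → K)} {a b : Fin 2 → K}
    (hmem : ∀ v, v ∈ Tm ↔ ∃ p q : O, v = p • a + q • b)
    (hz : ∀ p q : O, p • a + q • b = 0 → p = 0 ∧ q = 0)
    (haA : a ∈ A) (hanot : a ∉ ϖ • Tm) (hbB : b ∈ B) (hbnot : b ∉ ϖ • Tm)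
    (hAl : ϖ • Tm < A) (hAu : A < Tm) (hBl : ϖ • Tm < B) (hBu : B < Tm)
    (hCl : ϖ • Tm < C) (hCu : C < Tm) (hCA : C ≠ A) (hCB : C ≠ B)
    (hC : BTStable ρ C)
    {χ χ' : G → O} {g₀ : G}
    (hχ : ∀ v ∈ A, Matrix.mulVec (ρ g₀ : Matrix (Fin 2) (Fin 2) K) v - χ g₀ • v ∈ ϖ • Tm)
    (hχ' : ∀ v ∈ B, Matrix.mulVec (ρ g₀ : Matrix (Fin 2) (Fin 2) K) v - χ' g₀ • v ∈ ϖ • Tm)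
    (hdist : ¬ ϖ ∣ (χ g₀ - χ' g₀)) : False := by
  obtain ⟨c, hcC, hcnot⟩ := SetLike.exists_of_lt hCl
  obtain ⟨p, q, hc⟩ := (hmem c).1 (le_of_lt hCu hcC)
  have hCeq : ∀ {D : Submodule O (Fin 2 → K)}, ϖ • Tm < D → D < Tm → c ∈ D → C = D := by
    intro D hDl hDu hcD
    apply le_antisymm
    · intro v hv
      obtain ⟨σ, hσ⟩ :=
        cover hϖ hmem hz (le_of_lt hCl) (le_of_lt hCu) hCu.ne hcC hcnot v hv
      have hh : v = (v - σ • c) + σ • c := by abel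
      rw [hh]
      exact D.add_mem (le_of_lt hDl hσ) (D.smul_mem _ hcD)
    · intro v hv
      obtain ⟨σ, hσ⟩ :=
        cover hϖ hmem hz (le_of_lt hDl) (le_of_lt hDu) hDu.ne hcD hcnot v hv
      have hh : v = (v - σ • c) + σ • c := by abel
      rw [hh]
      exact C.add_mem (le_of_lt hCl hσ) (C.smul_mem _ hcC)
  have hq : ¬ ϖ ∣ q := by
    rintro ⟨q', rfl⟩
    apply hCA
    refine hCeq hAl hAu ?_
    have hqb : (ϖ * q') • b ∈ ϖ • Tm := by
      rw [mul_smul]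
      exact mem_osmul.2 ⟨q' • b, Tm.smul_mem _ (le_of_lt hBu hbB), rfl⟩
    rw [hc]
    exact A.add_mem (A.smul_mem _ haA) (le_of_lt hAl hqb)
  have hp : ¬ ϖ ∣ p := by
    rintro ⟨p', rfl⟩
    apply hCB
    refine hCeq hBl hBu ?_
    have hpa : (ϖ * p') • a ∈ ϖ • Tm := by
      rw [mul_smul]
      exact mem_osmul.2 ⟨p' • a, Tm.smul_mem _ (le_of_lt hAu haA), rfl⟩
    rw [hc]
    exact B.add_mem (le_of_lt hBl hpa) (B.smul_mem _ hbB)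
  obtain ⟨up, hup⟩ := (unit_or_dvd hϖ p).resolve_right hp
  obtain ⟨uq, huq⟩ := (unit_or_dvd hϖ q).resolve_right hq
  obtain ⟨r, hr⟩ :=
    cover hϖ hmem hz (le_of_lt hCl) (le_of_lt hCu) hCu.ne hcC hcnot _ (hC g₀ c hcC)
  have hkey : (p * (χ g₀ - r)) • a + (q * (χ' g₀ - r)) • b =
      (Matrix.mulVec (ρ g₀ : Matrix (Fin 2) (Fin 2) K) c - r • c) -
      p • (Matrix.mulVec (ρ g₀ : Matrix (Fin 2) (Fin 2) K) a - χ g₀ • a) -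
      q • (Matrix.mulVec (ρ g₀ : Matrix (Fin 2) (Fin 2) K) b - χ' g₀ • b) := by
    rw [hc, Matrix.mulVec_add, mulVec_osmul, mulVec_osmul]
    module
  have hmem2 : (p * (χ g₀ - r)) • a + (q * (χ' g₀ - r)) • b ∈ ϖ • Tm := by
    rw [hkey]
    exact Submodule.sub_mem _
      (Submodule.sub_mem _ hr (Submodule.smul_mem _ _ (hχ a haA)))
      (Submodule.smul_mem _ _ (hχ' b hbB))
  obtain ⟨hd1, hd2⟩ := (coord_mem_osmul hmem hz).1 hmem2
  have hda : ϖ ∣ (χ g₀ - r) := by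
    have h5 := hd1.mul_left (↑up⁻¹ : O)
    rwa [← mul_assoc, ← hup, Units.inv_mul, one_mul] at h5
  have hdb : ϖ ∣ (χ' g₀ - r) := by
    have h5 := hd2.mul_left (↑uq⁻¹ : O)
    rwa [← mul_assoc, ← huq, Units.inv_mul, one_mul] at h5
  apply hdist
  have hh : χ g₀ - χ' g₀ = (χ g₀ - r) - (χ' g₀ - r) := by ring
  rw [hh]
  exact dvd_sub hda hdb

end C9
end BTAux
namespace BTAux
section C10

variable {O : Type*} [CommRing O] [IsDomain O] [IsDiscreteValuationRing O]
  {K : Type*} [Field K] [Algebra O K] [IsFractionRing O K]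
variable {G : Type*} [Group G]
variable {ϖ : O} {Tm : Submodule O (Fin 2 → K)}

/-- If the two characters agree mod `ϖ`, a third stable line exists. -/
lemma third_line (hϖ : Irreducible ϖ)
    {ρ : G →* GL (Fin 2) K} (hT : BTStable ρ Tm)
    {A B : Submodule O (Fin 2 → K)} {a b : Fin 2 → K}
    (hmem : ∀ v, v ∈ Tm ↔ ∃ p q : O, v = p • a + q • b)
    (hz : ∀ p q : O, p • a + q • b = 0 → p = 0 ∧ q = 0)
    (haA : a ∈ A) (hbB : b ∈ B)
    (hAu : A < Tm) (hBu : B < Tm)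
    {χ χ' : G → O}
    (hχ : ∀ g : G, ∀ v ∈ A,
      Matrix.mulVec (ρ g : Matrix (Fin 2) (Fin 2) K) v - χ g • v ∈ ϖ • Tm)
    (hχ' : ∀ g : G, ∀ v ∈ B,
      Matrix.mulVec (ρ g : Matrix (Fin 2) (Fin 2) K) v - χ' g • v ∈ ϖ • Tm)
    (hco : ∀ g : G, ϖ ∣ (χ g - χ' g)) :
    ∃ C : Submodule O (Fin 2 → K), BTStable ρ C ∧ ϖ • Tm < C ∧ C < Tm ∧ C ≠ A ∧ C ≠ B := by
  have haT : a ∈ Tm := le_of_lt hAu haA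
  have hbT : b ∈ Tm := le_of_lt hBu hbB
  set C : Submodule O (Fin 2 → K) := Submodule.span O {a + b} ⊔ ϖ • Tm with hC
  have hmemC : ∀ v, v ∈ C ↔ ∃ s : O, ∃ w ∈ ϖ • Tm, v = s • (a + b) + w := by
    intro v
    rw [hC, Submodule.mem_sup]
    constructor
    · rintro ⟨y', hy', z, hz', rfl⟩
      obtain ⟨s, rfl⟩ := Submodule.mem_span_singleton.1 hy'
      exact ⟨s, z, hz', rfl⟩
    · rintro ⟨s, w, hw, rfl⟩
      exact ⟨s • (a + b), Submodule.mem_span_singleton.2 ⟨s, rfl⟩, w, hw, rfl⟩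
  have hone : ¬ ϖ ∣ (1 : O) := fun h => hϖ.not_isUnit (isUnit_of_dvd_one h)
  have habnot : a + b ∉ ϖ • Tm := by
    intro h
    have h2 : (1 : O) • a + (1 : O) • b ∈ ϖ • Tm := by
      rwa [one_smul, one_smul]
    exact hone ((coord_mem_osmul hmem hz).1 h2).1
  have hanotC : a ∉ C := by
    intro h
    obtain ⟨s, w, hw, hww⟩ := (hmemC a).1 h
    have hwm : (1 - s) • a + (-s) • b ∈ ϖ • Tm := by
      have hcalc : (1 - s) • a + (-s) • b = w := by
        rw [eq_sub_of_add_eq' hww.symm]; module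
      rwa [hcalc]
    obtain ⟨h1, h2⟩ := (coord_mem_osmul hmem hz).1 hwm
    have : ϖ ∣ (1 : O) := by
      have hh : (1 : O) = (1 - s) + -(-s) := by ring
      rw [hh]
      exact dvd_add h1 (dvd_neg.2 h2)
    exact hone this
  have hbnotC : b ∉ C := by
    intro h
    obtain ⟨s, w, hw, hww⟩ := (hmemC b).1 h
    have hwm : (-s) • a + (1 - s) • b ∈ ϖ • Tm := by
      have hcalc : (-s) • a + (1 - s) • b = w := by
        rw [eq_sub_of_add_eq' hww.symm]; module
      rwa [hcalc]
    obtain ⟨h1, h2⟩ := (coord_mem_osmul hmem hz).1 hwm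
    have : ϖ ∣ (1 : O) := by
      have hh : (1 : O) = (1 - s) + -(-s) := by ring
      rw [hh]
      exact dvd_add h2 (dvd_neg.2 h1)
    exact hone this
  refine ⟨C, ?_, ?_, ?_, ?_, ?_⟩
  · -- stability
    intro g v hv
    obtain ⟨s, w, hw, rfl⟩ := (hmemC v).1 hv
    have hab : Matrix.mulVec (ρ g : Matrix (Fin 2) (Fin 2) K) (a + b) ∈ C := by
      obtain ⟨d, hd⟩ := hco g
      have hkey : Matrix.mulVec (ρ g : Matrix (Fin 2) (Fin 2) K) (a + b) =
          (Matrix.mulVec (ρ g : Matrix (Fin 2) (Fin 2) K) a - χ g • a) +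
          (Matrix.mulVec (ρ g : Matrix (Fin 2) (Fin 2) K) b - χ' g • b) +
          (χ' g - χ g) • b + χ g • (a + b) := by
        rw [Matrix.mulVec_add]; module
      rw [hkey]
      have hm1 : (χ' g - χ g) • b ∈ ϖ • Tm := by
        have hdd : χ' g - χ g = ϖ * (-d) := by
          have := hd
          rw [show χ' g - χ g = -(χ g - χ' g) by ring, this]; ring
        rw [hdd, mul_smul]
        exact mem_osmul.2 ⟨(-d) • b, Tm.smul_mem _ hbT, rfl⟩
      refine C.add_mem (C.add_mem (C.add_mem ?_ ?_) ?_) ?_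
      · exact le_sup_right (α := Submodule O (Fin 2 → K)) (hχ g a haA)
      · exact le_sup_right (α := Submodule O (Fin 2 → K)) (hχ' g b hbB)
      · exact le_sup_right (α := Submodule O (Fin 2 → K)) hm1
      · exact C.smul_mem _ (le_sup_left (α := Submodule O (Fin 2 → K))
          (Submodule.mem_span_singleton.2 ⟨1, one_smul _ _⟩))
    rw [Matrix.mulVec_add, mulVec_osmul]
    exact C.add_mem (C.smul_mem _ hab)
      (le_sup_right (α := Submodule O (Fin 2 → K)) (stable_osmul hT g w hw))
  · -- ϖT < C
    refine lt_of_le_of_ne le_sup_right fun h => ?_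
    exact habnot (h ▸ le_sup_left (α := Submodule O (Fin 2 → K))
      (Submodule.mem_span_singleton.2 ⟨1, one_smul _ _⟩) : a + b ∈ ϖ • Tm)
  · -- C < Tm
    refine lt_of_le_of_ne (sup_le ?_ ?_) fun h => hanotC (h ▸ haT)
    · exact Submodule.span_le.2 (by
        intro x hx
        rw [Set.mem_singleton_iff] at hx
        subst hx
        exact Tm.add_mem haT hbT)
    · exact Submodule.smul_le_self_of_tower ϖ Tm
  · exact fun h => hanotC (h ▸ haA)
  · exact fun h => hbnotC (h ▸ hbB)

end C10
end BTAux
namespace BTAux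
section C11

variable {O : Type*} [CommRing O] [IsDomain O] [IsDiscreteValuationRing O]
  {K : Type*} [Field K] [Algebra O K] [IsFractionRing O K]
variable {ϖ : O}

lemma cls_eq_of_eq {LA LB : BTLat O K} (h : LA.1 = LB.1) : BTcls LA = BTcls LB :=
  Quot.sound ⟨1, by rw [one_smul, h]⟩

lemma eq_of_cls_eq (hϖ : Irreducible ϖ) {T LA LB : BTLat O K}
    (hA : ϖ • T.1 < LA.1) (hA' : LA.1 < T.1) (hB : ϖ • T.1 < LB.1) (hB' : LB.1 < T.1)
    (h : BTcls LA = BTcls LB) : LA.1 = LB.1 := by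
  obtain ⟨c, hc⟩ := cls_eq_iff.1 h
  exact rigid_two hϖ hA.le hA'.le hA.ne' hA'.ne hB.le hB'.le hB.ne' hB'.ne c hc

end C11
end BTAux

open BTAux in
/-- Let `x = [T] ∈ X(ρ)`.  Then `x` has no neighbor in `X(ρ)` iff the
reduction `ρ̄_T` (the action on `T/ϖT`) is irreducible; exactly one neighbor iff `ρ̄_T` is
reducible but indecomposable; exactly two neighbors iff `ρ̄_T` decomposes as a direct sum
of two distinct characters.  (Stable lines of `T/ϖT` are encoded as stable submodules
`ϖT ⊊ T' ⊊ T`.) -/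
theorem neighbors_of_fixed_vertex
    (ϖ : O) (hϖ : Irreducible ϖ)
    (ρ : G →* GL (Fin 2) K)
    (T : BTLat O K) (hT : BTStable ρ T.1) :
    -- no neighbor in `X(ρ)` ↔ `ρ̄_T` irreducible
    ((¬ ∃ y ∈ fixedVtx ρ, (BTtree O K ϖ).Adj (BTcls T) y) ↔
      ¬ ∃ T' : Submodule O (Fin 2 → K), BTStable ρ T' ∧ ϖ • T.1 < T' ∧ T' < T.1) ∧
    -- exactly one neighbor ↔ `ρ̄_T` reducible but indecomposable
    ((∃ y ∈ fixedVtx ρ, (BTtree O K ϖ).Adj (BTcls T) y ∧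
        ∀ z ∈ fixedVtx ρ, (BTtree O K ϖ).Adj (BTcls T) z → z = y) ↔
      ((∃ T' : Submodule O (Fin 2 → K), BTStable ρ T' ∧ ϖ • T.1 < T' ∧ T' < T.1) ∧
        ¬ ∃ T' T'' : Submodule O (Fin 2 → K), BTStable ρ T' ∧ BTStable ρ T'' ∧
          ϖ • T.1 < T' ∧ T' < T.1 ∧ ϖ • T.1 < T'' ∧ T'' < T.1 ∧
          T' ⊓ T'' ≤ ϖ • T.1 ∧ T.1 ≤ T' ⊔ T'')) ∧
    -- exactly two neighbors ↔ `ρ̄_T` is the direct sum of two distinct characters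
    ((∃ y₁ ∈ fixedVtx ρ, ∃ y₂ ∈ fixedVtx ρ, y₁ ≠ y₂ ∧
        (BTtree O K ϖ).Adj (BTcls T) y₁ ∧ (BTtree O K ϖ).Adj (BTcls T) y₂ ∧
        ∀ z ∈ fixedVtx ρ, (BTtree O K ϖ).Adj (BTcls T) z → z = y₁ ∨ z = y₂) ↔
      (∃ T' T'' : Submodule O (Fin 2 → K), BTStable ρ T' ∧ BTStable ρ T'' ∧
        ϖ • T.1 < T' ∧ T' < T.1 ∧ ϖ • T.1 < T'' ∧ T'' < T.1 ∧
        T' ⊓ T'' ≤ ϖ • T.1 ∧ T.1 ≤ T' ⊔ T'' ∧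
        ∃ χ χ' : G → O,
          (∀ g : G, ∀ v ∈ T', Matrix.mulVec (ρ g : Matrix (Fin 2) (Fin 2) K) v - χ g • v ∈
            ϖ • T.1) ∧
          (∀ g : G, ∀ v ∈ T'', Matrix.mulVec (ρ g : Matrix (Fin 2) (Fin 2) K) v - χ' g • v ∈
            ϖ • T.1) ∧
          ∃ g : G, χ g - χ' g ∉ Ideal.span {ϖ})) := by
  obtain ⟨e0, e1, hmem, hz⟩ := exists_basis T
  refine ⟨?_, ?_, ?_⟩
  · -- Part 1
    constructor
    · intro hno
      rintro ⟨T', hstab, h1, h2⟩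
      obtain ⟨L, hL⟩ := lat_mid hϖ T T' h1.le h2.le
      have hnb := (neighbor_iff hϖ ρ T (BTcls L)).2
        ⟨L, by rw [hL]; exact hstab, by rw [hL]; exact h1, by rw [hL]; exact h2, rfl⟩
      exact hno ⟨BTcls L, hnb.1, hnb.2⟩
    · rintro hnored ⟨y, hy, hadj⟩
      obtain ⟨A, hst, h1, h2, -⟩ := (neighbor_iff hϖ ρ T y).1 ⟨hy, hadj⟩
      exact hnored ⟨A.1, hst, h1, h2⟩
  · -- Part 2
    constructor
    · rintro ⟨y, hy, hadj, huniq⟩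
      obtain ⟨A, hst, h1, h2, hcls⟩ := (neighbor_iff hϖ ρ T y).1 ⟨hy, hadj⟩
      refine ⟨⟨A.1, hst, h1, h2⟩, ?_⟩
      rintro ⟨P, Q, hstP, hstQ, hP1, hP2, hQ1, hQ2, hinf, -⟩
      have hPQ : P ≠ Q := by
        intro h
        subst h
        rw [inf_idem] at hinf
        exact lt_irrefl _ (lt_of_lt_of_le hP1 hinf)
      obtain ⟨LP, hLP⟩ := lat_mid hϖ T P hP1.le hP2.le
      obtain ⟨LQ, hLQ⟩ := lat_mid hϖ T Q hQ1.le hQ2.le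
      have hnbP := (neighbor_iff hϖ ρ T (BTcls LP)).2
        ⟨LP, by rw [hLP]; exact hstP, by rw [hLP]; exact hP1, by rw [hLP]; exact hP2, rfl⟩
      have hnbQ := (neighbor_iff hϖ ρ T (BTcls LQ)).2
        ⟨LQ, by rw [hLQ]; exact hstQ, by rw [hLQ]; exact hQ1, by rw [hLQ]; exact hQ2, rfl⟩
      have hePQ : BTcls LP = BTcls LQ :=
        (huniq _ hnbP.1 hnbP.2).trans (huniq _ hnbQ.1 hnbQ.2).symm
      apply hPQ
      rw [← hLP, ← hLQ]
      exact eq_of_cls_eq hϖ (T := T) (by rw [hLP]; exact hP1) (by rw [hLP]; exact hP2)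
        (by rw [hLQ]; exact hQ1) (by rw [hLQ]; exact hQ2) hePQ
    · rintro ⟨⟨T', hstab, h1, h2⟩, hnopair⟩
      obtain ⟨L, hL⟩ := lat_mid hϖ T T' h1.le h2.le
      have hnb := (neighbor_iff hϖ ρ T (BTcls L)).2
        ⟨L, by rw [hL]; exact hstab, by rw [hL]; exact h1, by rw [hL]; exact h2, rfl⟩
      refine ⟨BTcls L, hnb.1, hnb.2, ?_⟩
      intro z hz' hadj
      obtain ⟨C, hstC, hc1, hc2, hclsC⟩ := (neighbor_iff hϖ ρ T z).1 ⟨hz', hadj⟩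
      by_cases hCT : C.1 = T'
      · rw [← hclsC]
        exact cls_eq_of_eq (by rw [hCT, hL])
      · exfalso
        have hTC : T' ≠ C.1 := fun h => hCT h.symm
        obtain ⟨hinf, hsup⟩ := two_distinct hϖ hmem hz h1 h2 hc1 hc2 hTC
        exact hnopair ⟨T', C.1, hstab, hstC, h1, h2, hc1, hc2, hinf, hsup⟩
  · -- Part 3
    constructor
    · rintro ⟨y₁, hy₁, y₂, hy₂, hne12, hadj1, hadj2, huniq⟩
      obtain ⟨A, hstA, hA1, hA2, hclsA⟩ := (neighbor_iff hϖ ρ T y₁).1 ⟨hy₁, hadj1⟩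
      obtain ⟨B, hstB, hB1, hB2, hclsB⟩ := (neighbor_iff hϖ ρ T y₂).1 ⟨hy₂, hadj2⟩
      have hABne : A.1 ≠ B.1 := by
        intro h
        exact hne12 (hclsA ▸ hclsB ▸ cls_eq_of_eq h : y₁ = y₂)
      obtain ⟨hinf, hsup⟩ := two_distinct hϖ hmem hz hA1 hA2 hB1 hB2 hABne
      obtain ⟨χ, hχ⟩ := char_exists hϖ hmem hz hT hA1 hA2 hstA
      obtain ⟨χ', hχ'⟩ := char_exists hϖ hmem hz hT hB1 hB2 hstB
      refine ⟨A.1, B.1, hstA, hstB, hA1, hA2, hB1, hB2, hinf, hsup, χ, χ', hχ, hχ', ?_⟩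
      by_contra hnone
      push_neg at hnone
      have hco : ∀ g, ϖ ∣ (χ g - χ' g) := fun g => Ideal.mem_span_singleton.1 (hnone g)
      obtain ⟨a, b, haA, hanot, hbB, hbnot, hmem2, hz2⟩ :=
        basis_adapted hϖ hmem hz hA1 hA2 hB1 hB2 hABne
      obtain ⟨C, hstC, hc1, hc2, hCA, hCB⟩ :=
        third_line hϖ hT hmem2 hz2 haA hbB hA2 hB2 hχ hχ' hco
      obtain ⟨LC, hLC⟩ := lat_mid hϖ T C hc1.le hc2.le
      have hnbC := (neighbor_iff hϖ ρ T (BTcls LC)).2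
        ⟨LC, by rw [hLC]; exact hstC, by rw [hLC]; exact hc1, by rw [hLC]; exact hc2, rfl⟩
      rcases huniq _ hnbC.1 hnbC.2 with h | h
      · apply hCA
        rw [← hLC]
        exact eq_of_cls_eq hϖ (T := T) (by rw [hLC]; exact hc1) (by rw [hLC]; exact hc2)
          hA1 hA2 (h.trans hclsA.symm)
      · apply hCB
        rw [← hLC]
        exact eq_of_cls_eq hϖ (T := T) (by rw [hLC]; exact hc1) (by rw [hLC]; exact hc2)
          hB1 hB2 (h.trans hclsB.symm)
    · rintro ⟨P, Q, hstP, hstQ, hP1, hP2, hQ1, hQ2, hinf, hsup, χ, χ', hχ, hχ', g₀, hg₀⟩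
      have hPQ : P ≠ Q := by
        intro h
        subst h
        rw [inf_idem] at hinf
        exact lt_irrefl _ (lt_of_lt_of_le hP1 hinf)
      obtain ⟨LP, hLP⟩ := lat_mid hϖ T P hP1.le hP2.le
      obtain ⟨LQ, hLQ⟩ := lat_mid hϖ T Q hQ1.le hQ2.le
      have hnbP := (neighbor_iff hϖ ρ T (BTcls LP)).2
        ⟨LP, by rw [hLP]; exact hstP, by rw [hLP]; exact hP1, by rw [hLP]; exact hP2, rfl⟩
      have hnbQ := (neighbor_iff hϖ ρ T (BTcls LQ)).2
        ⟨LQ, by rw [hLQ]; exact hstQ, by rw [hLQ]; exact hQ1, by rw [hLQ]; exact hQ2, rfl⟩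
      refine ⟨BTcls LP, hnbP.1, BTcls LQ, hnbQ.1, ?_, hnbP.2, hnbQ.2, ?_⟩
      · intro h
        apply hPQ
        rw [← hLP, ← hLQ]
        exact eq_of_cls_eq hϖ (T := T) (by rw [hLP]; exact hP1) (by rw [hLP]; exact hP2)
          (by rw [hLQ]; exact hQ1) (by rw [hLQ]; exact hQ2) h
      · intro z hz' hadj
        obtain ⟨C, hstC, hc1, hc2, hclsC⟩ := (neighbor_iff hϖ ρ T z).1 ⟨hz', hadj⟩
        by_cases hCP : C.1 = P
        · left
          rw [← hclsC]
          exact cls_eq_of_eq (by rw [hCP, hLP])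
        by_cases hCQ : C.1 = Q
        · right
          rw [← hclsC]
          exact cls_eq_of_eq (by rw [hCQ, hLQ])
        exfalso
        obtain ⟨a, b, haP, hanot, hbQ, hbnot, hmem2, hz2⟩ :=
          basis_adapted hϖ hmem hz hP1 hP2 hQ1 hQ2 hPQ
        have hdvd : ¬ ϖ ∣ (χ g₀ - χ' g₀) := fun hd => hg₀ (Ideal.mem_span_singleton.2 hd)
        exact no_third hϖ hmem2 hz2 haP hanot hbQ hbnot hP1 hP2 hQ1 hQ2 hc1 hc2 hCP hCQ
          hstC (hχ g₀) (hχ' g₀) hdvd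

end
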